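/- Let ω be the step function ω(x) = p₀ + Σ_{j=1}^n (p_j − p_{j−1}) 1(x > x_j) with 0 ≤ x₁ ≤ … ≤ x_n and p_j ≥ 0, and write ω_k(x) = p₀ + Σ_{j=1}^k (p_j − p_{j−1}) 1(x > x_j). Let W^{(q)} denote q-scale functions satisfying W^{(q₂)} − W^{(q₁)} = (q₂−q₁) W^{(q₂)}∗W^{(q₁)}, and for fixed y let 𝒲_k(·,y) be the unique locally bounded solution of 𝒲_k(x,y) = W(x−y) + ∫_y^x W(x−z) ω_k(z) 𝒲_k(z,y) dz. Then 𝒲_{k+1}(x,y) = 𝒲_k(x,y) for all x ≤ x_{k+1}, and for all x: 𝒲_{k+1}(x,y) = 𝒲_k(x,y) + (p_{k+1} − p_k) ∫_{x_{k+1}}^x W^{(p_{k+1})}(x−z) 𝒲_k(z,y) dz. -/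

import Mathlib

open Set MeasureTheory intervalIntegral Finset

open Filter

def LocallyBdd (f : ℝ → ℝ) : Prop :=
  ∀ K : Set ℝ, IsCompact K → ∃ M : ℝ, ∀ x ∈ K, |f x| ≤ M

/-- The truncated step function `ω_k(z) = p₀ + Σ_{j=1}^k (p_j − p_{j−1}) 1(z > x_j)`. -/
noncomputable def stepOmega (p : ℕ → ℝ) (xs : ℕ → ℝ) (k : ℕ) (z : ℝ) : ℝ :=
  p 0 + ∑ j ∈ Finset.range k, (p (j + 1) - p j) * (if xs (j + 1) < z then (1:ℝ) else 0)

lemma continuous_locallyBdd {f : ℝ → ℝ} (hf : Continuous f) : LocallyBdd f := by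
  intro K hK
  rcases K.eq_empty_or_nonempty with h | h
  · exact ⟨0, by simp [h]⟩
  obtain ⟨M, hM⟩ := hK.exists_bound_of_continuousOn hf.continuousOn
  exact ⟨M, fun x hx => by simpa using hM x hx⟩

lemma locallyBdd_mul {f g : ℝ → ℝ} (hf : LocallyBdd f) (hg : LocallyBdd g) :
    LocallyBdd (fun x => f x * g x) := by
  intro K hK
  obtain ⟨M, hM⟩ := hf K hK
  obtain ⟨N, hN⟩ := hg K hK
  refine ⟨(|M|+1) * (|N|+1), fun x hx => ?_⟩
  rw [abs_mul]
  have h1 := hM x hx; have h2 := hN x hx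
  have := abs_nonneg (f x); have := abs_nonneg (g x)
  nlinarith [abs_nonneg M, abs_nonneg N, le_abs_self M, le_abs_self N]

lemma stepOmega_bound (p : ℕ → ℝ) (xs : ℕ → ℝ) (k : ℕ) (z : ℝ) :
    |stepOmega p xs k z| ≤ |p 0| + ∑ j ∈ Finset.range k, |p (j + 1) - p j| := by
  refine (abs_add_le _ _).trans ?_
  gcongr
  refine (Finset.abs_sum_le_sum_abs _ _).trans ?_
  apply Finset.sum_le_sum
  intro j hj
  rw [abs_mul]
  split_ifs with h' <;> simp

lemma stepOmega_locallyBdd (p : ℕ → ℝ) (xs : ℕ → ℝ) (k : ℕ) : LocallyBdd (stepOmega p xs k) :=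
  fun K _ => ⟨|p 0| + ∑ j ∈ Finset.range k, |p (j + 1) - p j|, fun z _ => stepOmega_bound p xs k z⟩

lemma stepOmega_measurable (p : ℕ → ℝ) (xs : ℕ → ℝ) (k : ℕ) :
    Measurable (stepOmega p xs k) := by
  unfold stepOmega
  apply Measurable.add measurable_const
  apply Finset.measurable_sum
  intro j _
  apply Measurable.const_mul
  exact Measurable.ite (measurableSet_Ioi) measurable_const measurable_const

lemma stepOmega_eq_of_le {p xs : ℕ → ℝ} {k : ℕ} {z : ℝ} (h : z ≤ xs (k+1)) :
    stepOmega p xs (k+1) z = stepOmega p xs k z := by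
  unfold stepOmega
  rw [Finset.sum_range_succ]
  simp [not_lt.mpr h]

lemma stepOmega_eq_const {p xs : ℕ → ℝ} (hxsmono : ∀ j, xs j ≤ xs (j + 1)) {k : ℕ} {z : ℝ}
    (h : xs k < z) : stepOmega p xs k z = p k := by
  have hmono : Monotone xs := monotone_nat_of_le_succ hxsmono
  unfold stepOmega
  have : ∀ j ∈ Finset.range k, (p (j + 1) - p j) * (if xs (j + 1) < z then (1:ℝ) else 0)
      = p (j+1) - p j := by
    intro j hj
    have hjk := Finset.mem_range.mp hj
    have : xs (j+1) ≤ xs k := hmono (by omega)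
    rw [if_pos (lt_of_le_of_lt this h), mul_one]
  rw [Finset.sum_congr rfl this, Finset.sum_range_sub]
  ring

lemma locallyBdd_sub {f g : ℝ → ℝ} (hf : LocallyBdd f) (hg : LocallyBdd g) :
    LocallyBdd (fun x => f x - g x) := by
  intro K hK
  obtain ⟨M, hM⟩ := hf K hK
  obtain ⟨N, hN⟩ := hg K hK
  exact ⟨M + N, fun x hx => (abs_sub (f x) (g x)).trans (add_le_add (hM x hx) (hN x hx))⟩

lemma wzero {W : ℝ → ℝ} (hc : Continuous W) (hneg : ∀ x < (0:ℝ), W x = 0) : W 0 = 0 := by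
  have h1 : Tendsto W (nhdsWithin 0 (Iio 0)) (nhds (W 0)) :=
    (hc.tendsto 0).mono_left nhdsWithin_le_nhds
  have h2 : Tendsto W (nhdsWithin 0 (Iio 0)) (nhds 0) := by
    apply Tendsto.congr' _ tendsto_const_nhds
    filter_upwards [self_mem_nhdsWithin] with x hx
    exact (hneg x hx).symm
  exact tendsto_nhds_unique h1 h2

/-- integrability of (measurable loc bdd) * (aemeasurable loc bdd) on an interval -/
lemma II_helper {F G : ℝ → ℝ} (hF : AEMeasurable F (volume : Measure ℝ)) (hFb : LocallyBdd F)
    (hG : Measurable G) (hGb : LocallyBdd G) (a b : ℝ) :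
    IntervalIntegrable (fun z => G z * F z) volume a b := by
  obtain ⟨M, hM⟩ := locallyBdd_mul hGb hFb (uIcc a b) isCompact_uIcc
  constructor <;>
  · refine Integrable.mono' (integrable_const M) ((hG.aemeasurable.mul hF).mono_measure
      Measure.restrict_le_self).aestronglyMeasurable ?_
    refine (ae_restrict_iff' measurableSet_Ioc).2 (ae_of_all _ fun z hz => ?_)
    apply hM
    first
      | exact Ioc_subset_Icc_self.trans Icc_subset_uIcc hz
      | exact Ioc_subset_Icc_self.trans Icc_subset_uIcc' hz

lemma measurable_param_integral {y : ℝ} {f : ℝ × ℝ → ℝ} (hf : Measurable f) :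
    Measurable fun x => ∫ z in Ioc y x, f (x, z) := by
  have h1 : ∀ x, ∫ z in Ioc y x, f (x, z)
      = ∫ z, (Ioc y x).indicator (fun z => f (x, z)) z := fun x =>
    (MeasureTheory.integral_indicator measurableSet_Ioc).symm
  simp_rw [h1]
  have hs : MeasurableSet {p : ℝ × ℝ | p.2 ∈ Ioc y p.1} := by
    apply MeasurableSet.inter
    · exact measurable_snd measurableSet_Ioi
    · exact measurableSet_le measurable_snd measurable_fst
  have hm : Measurable fun p : ℝ × ℝ => (Ioc y p.1).indicator (fun z => f (p.1, z)) p.2 := by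
    have h2 : (fun p : ℝ × ℝ => (Ioc y p.1).indicator (fun z => f (p.1, z)) p.2)
        = fun p : ℝ × ℝ => if p ∈ {q : ℝ × ℝ | q.2 ∈ Ioc y q.1} then f p else 0 := by
      funext p; rw [Set.indicator_apply]; rfl
    rw [h2]
    exact Measurable.ite hs hf measurable_const
  exact (hm.stronglyMeasurable.integral_prod_right').measurable

lemma maximal_open (h : ℝ → ℝ) :
    ∃ G : Set ℝ, IsOpen G ∧ AEMeasurable h (volume.restrict G) ∧
      ∀ U : Set ℝ, IsOpen U → AEMeasurable h (volume.restrict U) → U ⊆ G := by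
  classical
  set C : Set (Set ℝ) := {U ∈ TopologicalSpace.countableBasis ℝ |
    AEMeasurable h (volume.restrict U)} with hC
  have hCc : C.Countable := (TopologicalSpace.countable_countableBasis ℝ).mono (Set.sep_subset _ _)
  refine ⟨⋃₀ C, ?_, ?_, ?_⟩
  · exact isOpen_sUnion fun U hU => TopologicalSpace.isOpen_of_mem_countableBasis hU.1
  · rw [Set.sUnion_eq_iUnion]
    haveI : Countable C := hCc.to_subtype
    exact aemeasurable_iUnion_iff.2 fun U => U.2.2
  · intro U hUopen hUaem x hx
    obtain ⟨b, hb, hxb, hbU⟩ :=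
      (TopologicalSpace.isBasis_countableBasis ℝ).exists_subset_of_mem_open hx hUopen
    exact ⟨b, ⟨hb, hUaem.mono_measure (Measure.restrict_mono hbU le_rfl)⟩, hxb⟩

lemma step_meas {W g F : ℝ → ℝ} {y T : ℝ}
    (hWc : Continuous W)
    (hg : Measurable g)
    (hhb : LocallyBdd (fun z => g z * F z))
    (heq : ∀ x ≥ y, F x = W (x - y) + ∫ z in y..x, W (x - z) * g z * F z)
    (hTy : y ≤ T)
    (hPT : AEMeasurable (fun z => g z * F z) (volume.restrict (Ioc y T))) :
    AEMeasurable (fun z => g z * F z) (volume.restrict (Ioc y (T + 1))) := by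
  classical
  set h : ℝ → ℝ := fun z => g z * F z with hhdef
  obtain ⟨G, hGopen, hGaem, hGmax⟩ := maximal_open h
  set V : ℝ → Set ℝ := fun x => {z | z ∈ Ioo T x ∧ W (x - z) ≠ 0} with hVdef
  have hVopen : ∀ x, IsOpen (V x) := by
    intro x
    have hv : V x = Ioo T x ∩ (fun z => W (x - z)) ⁻¹' ({0}ᶜ) := by
      ext z; simp [hVdef]
    rw [hv]
    exact isOpen_Ioo.inter (isOpen_compl_singleton.preimage
      (hWc.comp (continuous_const.sub continuous_id)))
  have hVsub : ∀ x, V x ⊆ Ioc y x := fun x z hz =>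
    ⟨lt_of_le_of_lt hTy hz.1.1, le_of_lt hz.1.2⟩
  have claim1 : ∀ x, IntegrableOn (fun z => W (x - z) * h z) (Ioc y x) volume →
      volume (V x \ G) = 0 := by
    intro x hint
    have haem : AEMeasurable (fun z => W (x - z) * h z) (volume.restrict (V x)) :=
      hint.aemeasurable.mono_measure (Measure.restrict_mono (hVsub x) le_rfl)
    have hWm : Measurable fun z => (W (x - z))⁻¹ :=
      ((hWc.comp (continuous_const.sub continuous_id)).measurable).inv
    have haem2 : AEMeasurable h (volume.restrict (V x)) := by
      refine (hWm.aemeasurable.mul haem).congr ?_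
      filter_upwards [self_mem_ae_restrict (hVopen x).measurableSet] with z hz
      have := hz.2
      simp only [Pi.mul_apply]
      rw [← mul_assoc, inv_mul_cancel₀ this, one_mul]
    rw [Set.diff_eq_empty.2 (hGmax _ (hVopen x) haem2)]
    simp
  set E : Set ℝ := Ioc y T ∪ (G ∩ Ioo T (T + 1)) with hEdef
  have hEmeas : MeasurableSet E :=
    measurableSet_Ioc.union (hGopen.measurableSet.inter measurableSet_Ioo)
  have hEaem : AEMeasurable h (volume.restrict E) :=
    aemeasurable_union_iff.2
      ⟨hPT, hGaem.mono_measure (Measure.restrict_mono Set.inter_subset_left le_rfl)⟩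
  set h' : ℝ → ℝ := hEaem.mk h with hh'
  have hh'm : Measurable h' := hEaem.measurable_mk
  have hnull : volume ({z | h z ≠ h' z} ∩ E) = 0 := by
    have hmk := hEaem.ae_eq_mk
    rw [EventuallyEq, ae_iff] at hmk
    rw [← Measure.restrict_apply' hEmeas]
    exact hmk
  set J : ℝ → ℝ := fun x => ∫ z in Ioc y x, E.indicator (fun z => W (x - z) * h' z) z with hJ
  have hJm : Measurable J := by
    have hf : Measurable fun p : ℝ × ℝ => if p.2 ∈ E then W (p.1 - p.2) * h' p.2 else 0 := by
      refine Measurable.ite (measurable_snd hEmeas) ?_ measurable_const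
      exact (hWc.measurable.comp (measurable_fst.sub measurable_snd)).mul
        (hh'm.comp measurable_snd)
    have hrw : J = fun x => ∫ z in Ioc y x,
        (fun p : ℝ × ℝ => if p.2 ∈ E then W (p.1 - p.2) * h' p.2 else 0) (x, z) := by
      funext x; simp only [hJ, Set.indicator_apply]
    rw [hrw]
    exact measurable_param_integral hf
  set s : Set (ℝ × ℝ) := {p | (p.2 ∈ Ioo T p.1 ∧ W (p.1 - p.2) ≠ 0) ∧ p.2 ∉ G} with hs
  have hsmeas : MeasurableSet s := by
    refine (MeasurableSet.inter ?_ ?_).inter ((measurable_snd hGopen.measurableSet).compl)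
    · exact (measurableSet_lt measurable_const measurable_snd).inter
        (measurableSet_lt measurable_snd measurable_fst)
    · exact (hWc.measurable.comp (measurable_fst.sub measurable_snd)) (measurableSet_singleton 0) |>.compl
  have hslice : ∀ x, V x \ G = Prod.mk x ⁻¹' s := by
    intro x; ext z
    simp only [hVdef, hs, Set.mem_diff, Set.mem_setOf_eq, Set.mem_preimage, Set.mem_Ioo]
  have hρm : Measurable fun x => volume (V x \ G) := by
    simp_rw [hslice]
    exact measurable_measure_prodMk_left hsmeas
  -- bounds
  obtain ⟨Mh, hMh⟩ := hhb (Icc y (T + 1)) isCompact_Icc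
  obtain ⟨MW, hMW⟩ := continuous_locallyBdd hWc (Icc (-(T + 1 - y)) (T + 1 - y)) isCompact_Icc
  have hMh0 : 0 ≤ Mh := le_trans (abs_nonneg _) (hMh y ⟨le_refl y, by linarith⟩)
  have hMW0 : 0 ≤ MW := le_trans (abs_nonneg _) (hMW 0 ⟨by linarith, by linarith⟩)
  have main : ∀ x ∈ Ioc T (T + 1),
      F x = W (x - y) + if volume (V x \ G) = 0 then J x else 0 := by
    intro x hx
    have hyx : y ≤ x := hTy.trans (le_of_lt hx.1)
    have heqx := heq x hyx
    have hass : (fun z => W (x - z) * g z * F z) = fun z => W (x - z) * h z := by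
      funext z; rw [hhdef]; ring
    by_cases hρ : volume (V x \ G) = 0
    · rw [if_pos hρ]
      set N : Set ℝ := ({z | h z ≠ h' z} ∩ E) ∪ ((V x \ G) ∪ {x}) with hNdef
      have hNnull : volume N = 0 :=
        measure_union_null hnull (measure_union_null hρ (measure_singleton x))
      have hNae : ∀ᵐ z ∂(volume : Measure ℝ), z ∉ N := by
        rw [ae_iff]; simpa using hNnull
      have hpt : ∀ z, z ∉ N → z ∈ Ioc y x →
          W (x - z) * h z = E.indicator (fun z => W (x - z) * h' z) z := by
        intro z hzN hz
        simp only [hNdef, Set.mem_union, Set.mem_inter_iff, Set.mem_setOf_eq,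
          Set.mem_singleton_iff, not_or, not_and] at hzN
        obtain ⟨hzE', hzVG, hzx⟩ := hzN
        by_cases hzE : z ∈ E
        · rw [Set.indicator_of_mem hzE]
          have : h z = h' z := by
            by_contra hne; exact (hzE' hne) hzE
          rw [this]
        · rw [Set.indicator_of_notMem hzE]
          have hzT : T < z := by
            by_contra hle
            exact hzE (Or.inl ⟨hz.1, not_lt.1 hle⟩)
          have hzltx : z < x := lt_of_le_of_ne hz.2 hzx
          by_cases hW0 : W (x - z) = 0
          · rw [hW0, zero_mul]
          · exfalso
            have hzV : z ∈ V x := ⟨⟨hzT, hzltx⟩, hW0⟩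
            have hzG : z ∉ G := fun hzG =>
              hzE (Or.inr ⟨hzG, hzT, lt_of_lt_of_le hzltx hx.2⟩)
            exact hzVG ⟨hzV, hzG⟩
      have hae : (fun z => W (x - z) * h z) =ᵐ[volume.restrict (Ioc y x)]
          E.indicator (fun z => W (x - z) * h' z) := by
        rw [EventuallyEq, ae_restrict_iff' measurableSet_Ioc]
        filter_upwards [hNae] with z hzN hz
        exact hpt z hzN hz
      have hψint : IntegrableOn (E.indicator fun z => W (x - z) * h' z) (Ioc y x) volume := by
        refine Integrable.mono' (integrable_const (MW * Mh)) ?_ ?_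
        · exact ((hWc.measurable.comp (measurable_const.sub measurable_id)).mul hh'm).indicator
            hEmeas |>.aestronglyMeasurable.mono_measure Measure.restrict_le_self
        · rw [ae_restrict_iff' measurableSet_Ioc]
          filter_upwards [hNae] with z hzN hz
          rw [← hpt z hzN hz, Real.norm_eq_abs, abs_mul]
          have hz1 : z ∈ Icc y (T + 1) := ⟨le_of_lt hz.1, hz.2.trans hx.2⟩
          have hxz : x - z ∈ Icc (-(T + 1 - y)) (T + 1 - y) := by
            constructor <;> [linarith [hz.2, hz.1, hx.2]; linarith [hz.1, hx.2]]
          exact mul_le_mul (hMW _ hxz) (hMh _ hz1) (abs_nonneg _) hMW0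
      have hφint : IntegrableOn (fun z => W (x - z) * h z) (Ioc y x) volume :=
        hψint.congr hae.symm
      rw [heqx, intervalIntegral.integral_of_le hyx]
      have : ∫ z in Ioc y x, W (x - z) * g z * F z ∂volume = J x := by
        rw [hJ]
        rw [show (fun z => W (x - z) * g z * F z) = fun z => W (x - z) * h z from hass]
        exact integral_congr_ae hae
      rw [this]
    · rw [if_neg hρ]
      have hnint : ¬ IntegrableOn (fun z => W (x - z) * h z) (Ioc y x) volume :=
        fun hint => hρ (claim1 x hint)
      have hnII : ¬ IntervalIntegrable (fun z => W (x - z) * g z * F z) volume y x := by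
        rw [intervalIntegrable_iff_integrableOn_Ioc_of_le hyx, hass]
        exact hnint
      rw [heqx, intervalIntegral.integral_undef hnII, add_zero]
  have hm2 : Measurable fun x =>
      g x * (W (x - y) + if volume (V x \ G) = 0 then J x else 0) := by
    refine hg.mul (Measurable.add ?_ ?_)
    · exact hWc.measurable.comp (measurable_id.sub_const y)
    · exact Measurable.ite (hρm (measurableSet_singleton 0)) hJm measurable_const
  have hIocT : AEMeasurable h (volume.restrict (Ioc T (T + 1))) := by
    refine hm2.aemeasurable.congr ?_
    rw [EventuallyEq, ae_restrict_iff' measurableSet_Ioc]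
    refine ae_of_all _ fun x hx => ?_
    rw [hhdef]
    simp only
    rw [← main x hx]
  have hun : Ioc y (T + 1) = Ioc y T ∪ Ioc T (T + 1) :=
    (Ioc_union_Ioc_eq_Ioc hTy (by linarith)).symm
  rw [hun]
  exact aemeasurable_union_iff.2 ⟨hPT, hIocT⟩

lemma lemmaM {W g F : ℝ → ℝ} {y : ℝ}
    (hWc : Continuous W)
    (hg : Measurable g)
    (hFb : LocallyBdd F) (hgb : LocallyBdd g)
    (hbelow : ∀ x < y, F x = W (x - y))
    (heq : ∀ x ≥ y, F x = W (x - y) + ∫ z in y..x, W (x - z) * g z * F z) :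
    AEMeasurable F (volume : Measure ℝ) := by
  classical
  set h : ℝ → ℝ := fun z => g z * F z with hh
  have hhb : LocallyBdd h := locallyBdd_mul hgb hFb
  have Ptriv : ∀ t ≤ y, AEMeasurable h (volume.restrict (Ioc y t)) := by
    intro t ht
    rw [Ioc_eq_empty (not_lt.2 ht), Measure.restrict_empty]
    exact aemeasurable_zero_measure
  have Pmono : ∀ t t', t ≤ t' → AEMeasurable h (volume.restrict (Ioc y t')) →
      AEMeasurable h (volume.restrict (Ioc y t)) := fun t t' htt' hPt' =>
    hPt'.mono_measure (Measure.restrict_mono (Ioc_subset_Ioc_right htt') le_rfl)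
  have hPall : ∀ t, AEMeasurable h (volume.restrict (Ioc y t)) := by
    by_contra hc
    push_neg at hc
    obtain ⟨t₀, ht₀⟩ := hc
    set B := {t | ¬ AEMeasurable h (volume.restrict (Ioc y t))} with hB
    have hBne : B.Nonempty := ⟨t₀, ht₀⟩
    have hBy : ∀ b ∈ B, y ≤ b := fun b hb => by
      by_contra hby; exact hb (Ptriv b (le_of_lt (not_le.1 hby)))
    have hbdd : BddBelow B := ⟨y, hBy⟩
    set T := sInf B with hT
    have hTy : y ≤ T := le_csInf hBne hBy
    have hPltT : ∀ t < T, AEMeasurable h (volume.restrict (Ioc y t)) := fun t ht => by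
      by_contra hPt; exact absurd (csInf_le hbdd hPt) (not_le.2 ht)
    have hPT : AEMeasurable h (volume.restrict (Ioc y T)) := by
      rcases eq_or_lt_of_le hTy with heq' | hlt
      · exact Ptriv T heq'.ge
      · have hcov : Ioo y T = ⋃ n : ℕ, Ioc y (T - (T - y) / (n + 1)) := by
          ext z
          simp only [Set.mem_Ioo, Set.mem_iUnion, Set.mem_Ioc]
          constructor
          · rintro ⟨h1, h2⟩
            obtain ⟨n, hn⟩ := exists_nat_gt ((T - y) / (T - z))
            refine ⟨n, h1, ?_⟩
            have hTz : 0 < T - z := by linarith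
            rw [div_lt_iff₀ hTz] at hn
            have hlt2 : (T - y) / (n + 1) < T - z := by
              rw [div_lt_iff₀ (by positivity : (0:ℝ) < (n:ℝ) + 1)]
              nlinarith
            linarith
          · rintro ⟨n, h1, h2⟩
            have : 0 < (T - y) / ((n:ℝ) + 1) := div_pos (by linarith) (by positivity)
            exact ⟨h1, by linarith⟩
        have hres : volume.restrict (Ioc y T) = volume.restrict (Ioo y T) :=
          (Measure.restrict_congr_set Ioo_ae_eq_Ioc).symm
        rw [hres, hcov]
        refine aemeasurable_iUnion_iff.2 fun n => ?_
        refine hPltT _ ?_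
        have : 0 < (T - y) / ((n:ℝ) + 1) := div_pos (by linarith) (by positivity)
        linarith
    have hstep : AEMeasurable h (volume.restrict (Ioc y (T + 1))) :=
      step_meas hWc hg hhb heq hTy hPT
    have hlb : ∀ b ∈ B, T + 1 ≤ b := fun b hb => by
      by_contra hby
      exact hb (Pmono b (T + 1) (le_of_lt (not_le.1 hby)) hstep)
    have := le_csInf hBne hlb
    linarith
  have hne : ∀ᵐ z ∂(volume : Measure ℝ), z ≠ y := by
    rw [ae_iff]
    simp only [not_not, Set.setOf_eq_eq_singleton]
    exact measure_singleton y
  have hglob : AEMeasurable h (volume : Measure ℝ) := by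
    have h1 : AEMeasurable h (volume.restrict (Iic y)) := by
      have hm : Measurable fun x => g x * W (x - y) :=
        hg.mul (hWc.measurable.comp (measurable_id.sub_const y))
      refine hm.aemeasurable.congr ?_
      filter_upwards [ae_restrict_mem measurableSet_Iic, ae_restrict_of_ae hne] with z hz hzy
      show g z * W (z - y) = h z
      rw [hh]
      simp only
      rw [hbelow z (lt_of_le_of_ne hz hzy)]
    have h2 : AEMeasurable h (volume.restrict (Ioi y)) := by
      have hcov : Ioi y = ⋃ n : ℕ, Ioc y (y + (n + 1)) := by
        ext z
        simp only [Set.mem_Ioi, Set.mem_iUnion, Set.mem_Ioc]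
        constructor
        · intro h1
          obtain ⟨n, hn⟩ := exists_nat_gt (z - y)
          exact ⟨n, h1, by linarith⟩
        · rintro ⟨n, h1, _⟩; exact h1
      rw [hcov]
      exact aemeasurable_iUnion_iff.2 fun n => hPall _
    have := aemeasurable_union_iff.2 ⟨h1, h2⟩
    rwa [Set.Iic_union_Ioi, Measure.restrict_univ] at this
  set h2 : ℝ → ℝ := hglob.mk h with hh2
  have hh2m : Measurable h2 := hglob.measurable_mk
  have hKm : Measurable fun x => ∫ z in Ioc y x, W (x - z) * h2 z := by
    have hf : Measurable fun p : ℝ × ℝ => W (p.1 - p.2) * h2 p.2 :=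
      (hWc.measurable.comp (measurable_fst.sub measurable_snd)).mul (hh2m.comp measurable_snd)
    exact measurable_param_integral hf
  have hFeq : F = fun x => if x < y then W (x - y)
      else W (x - y) + ∫ z in Ioc y x, W (x - z) * h2 z := by
    funext x
    by_cases hxy : x < y
    · rw [if_pos hxy]; exact hbelow x hxy
    · rw [if_neg hxy]
      push_neg at hxy
      rw [heq x hxy, intervalIntegral.integral_of_le hxy]
      congr 1
      refine integral_congr_ae ?_
      filter_upwards [ae_restrict_of_ae hglob.ae_eq_mk] with z hz
      show W (x - z) * g z * F z = W (x - z) * h2 z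
      rw [mul_assoc]
      exact congrArg (fun t => W (x - z) * t) hz
  rw [hFeq]
  refine (Measurable.ite measurableSet_Iio ?_ ?_).aemeasurable
  · exact hWc.measurable.comp (measurable_id.sub_const y)
  · exact (hWc.measurable.comp (measurable_id.sub_const y)).add hKm

lemma gronwall {W g F : ℝ → ℝ} {y c : ℝ}
    (hWc : Continuous W)
    (hg : Measurable g) (hgb : LocallyBdd g)
    (hF : AEMeasurable F (volume : Measure ℝ)) (hFb : LocallyBdd F)
    (heq : ∀ x, y ≤ x → x ≤ c → F x = ∫ z in y..x, W (x - z) * g z * F z) :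
    ∀ x, y ≤ x → x ≤ c → F x = 0 := by
  intro x₀ hyx₀ hx₀c
  obtain ⟨M, hM⟩ := hFb (Icc y c) isCompact_Icc
  obtain ⟨CW, hCW⟩ := continuous_locallyBdd hWc (Icc 0 (c - y)) isCompact_Icc
  obtain ⟨Cg, hCg⟩ := hgb (Icc y c) isCompact_Icc
  have hyc : y ≤ c := le_trans hyx₀ hx₀c
  have hM0 : 0 ≤ M := le_trans (abs_nonneg _) (hM y ⟨le_refl _, hyc⟩)
  have hCW0 : 0 ≤ CW := le_trans (abs_nonneg _) (hCW 0 ⟨le_refl _, by linarith⟩)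
  have hCg0 : 0 ≤ Cg := le_trans (abs_nonneg _) (hCg y ⟨le_refl _, hyc⟩)
  set C := CW * Cg with hC
  have hC0 : 0 ≤ C := mul_nonneg hCW0 hCg0
  clear_value C
  have key : ∀ m : ℕ, ∀ x, y ≤ x → x ≤ c →
      |F x| ≤ M * (C * (x - y)) ^ m / m.factorial := by
    intro m
    induction m with
    | zero => intro x h1 h2; simpa using hM x ⟨h1, h2⟩
    | succ m ih =>
      intro x h1 h2
      rw [heq x h1 h2]
      have hGm : Measurable fun z => W (x - z) * g z :=
        (hWc.measurable.comp (measurable_const.sub measurable_id)).mul hg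
      have hGb : LocallyBdd fun z => W (x - z) * g z :=
        locallyBdd_mul (continuous_locallyBdd (hWc.comp (continuous_const.sub continuous_id))) hgb
      have hker : IntervalIntegrable (fun z => W (x - z) * g z * F z) volume y x :=
        II_helper hF hFb hGm hGb y x
      have hcont : Continuous fun z => C * M * C ^ m / (m.factorial : ℝ) * (z - y) ^ m := by
        continuity
      have hpoint : ∀ z ∈ Icc y x, ‖W (x - z) * g z * F z‖ ≤
          C * M * C ^ m / (m.factorial : ℝ) * (z - y) ^ m := by
        intro z hz
        have e1 : |W (x - z)| ≤ CW := hCW _ ⟨by linarith [hz.2], by linarith [hz.1, h2]⟩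
        have e2 : |g z| ≤ Cg := hCg _ ⟨hz.1, le_trans hz.2 h2⟩
        have e3 : |F z| ≤ M * (C * (z - y)) ^ m / m.factorial := ih z hz.1 (le_trans hz.2 h2)
        have hre : CW * Cg * (M * (C * (z - y)) ^ m / (m.factorial : ℝ))
            = C * M * C ^ m / (m.factorial : ℝ) * (z - y) ^ m := by
          rw [hC, mul_pow]; ring
        rw [Real.norm_eq_abs, abs_mul, abs_mul, ← hre]
        exact mul_le_mul (mul_le_mul e1 e2 (abs_nonneg _) hCW0) e3 (abs_nonneg _)
          (mul_nonneg hCW0 hCg0)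
      have hpow : (∫ z in y..x, (z - y) ^ m) = (x - y) ^ (m + 1) / (m + 1) := by
        rw [show (fun z : ℝ => (z - y) ^ m) = fun z : ℝ => (fun u : ℝ => u ^ m) (z - y) from rfl,
          intervalIntegral.integral_comp_sub_right (fun u : ℝ => u ^ m) y]
        simp [integral_pow]
      calc |∫ z in y..x, W (x - z) * g z * F z|
          ≤ ∫ z in y..x, ‖W (x - z) * g z * F z‖ := by
            rw [← Real.norm_eq_abs]
            exact intervalIntegral.norm_integral_le_integral_norm h1
        _ ≤ ∫ z in y..x, C * M * C ^ m / (m.factorial : ℝ) * (z - y) ^ m := by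
            exact intervalIntegral.integral_mono_on h1 hker.norm (hcont.intervalIntegrable y x)
              hpoint
        _ = C * M * C ^ m / (m.factorial : ℝ) * ((x - y) ^ (m + 1) / (m + 1)) := by
            rw [intervalIntegral.integral_const_mul, hpow]
        _ = M * (C * (x - y)) ^ (m + 1) / ((m + 1).factorial : ℝ) := by
            have hfne : (m.factorial : ℝ) ≠ 0 := Nat.cast_ne_zero.2 m.factorial_ne_zero
            rw [Nat.factorial_succ]
            push_cast
            rw [mul_pow]
            field_simp
            ring
  have hlim : Tendsto (fun m : ℕ => M * (C * (x₀ - y)) ^ m / (m.factorial : ℝ)) atTop (nhds 0) := by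
    have h0 := FloorSemiring.tendsto_pow_div_factorial_atTop (C * (x₀ - y))
    have := h0.const_mul M
    simpa [mul_div_assoc] using this
  have : |F x₀| ≤ 0 := ge_of_tendsto' hlim fun m => key m x₀ hyx₀ hx₀c
  exact abs_eq_zero.1 (le_antisymm this (abs_nonneg _))

lemma change_killing {W Wk g F : ℝ → ℝ} {y q : ℝ}
    (hWc : Continuous W) (hWneg : ∀ s < (0:ℝ), W s = 0)
    (hWkc : Continuous Wk) (hWkneg : ∀ s < (0:ℝ), Wk s = 0)
    (hres : ∀ s ≥ (0:ℝ), Wk s - W s = q * ∫ u in (0:ℝ)..s, Wk (s - u) * W u)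
    (hg : Measurable g) (hgb : LocallyBdd g)
    (hF : AEMeasurable F (volume : Measure ℝ)) (hFb : LocallyBdd F)
    (heq : ∀ x ≥ y, F x = W (x - y) + ∫ z in y..x, W (x - z) * g z * F z)
    {x : ℝ} (hx : y ≤ x) :
    F x = Wk (x - y) + ∫ z in y..x, Wk (x - z) * (g z - q) * F z := by
  classical
  have hW0 : W 0 = 0 := wzero hWc hWneg
  set F' : ℝ → ℝ := hF.mk F with hF'def
  have hF'm : Measurable F' := hF.measurable_mk
  have haeF : F =ᵐ[(volume : Measure ℝ)] F' := hF.ae_eq_mk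
  -- bounds
  obtain ⟨MF, hMF⟩ := hFb (Icc y x) isCompact_Icc
  obtain ⟨Cg, hCg⟩ := hgb (Icc y x) isCompact_Icc
  obtain ⟨CW, hCW⟩ := continuous_locallyBdd hWc (Icc (-(x - y)) (x - y)) isCompact_Icc
  obtain ⟨CWk, hCWk⟩ := continuous_locallyBdd hWkc (Icc (-(x - y)) (x - y)) isCompact_Icc
  have hMF0 : 0 ≤ MF := le_trans (abs_nonneg _) (hMF y ⟨le_refl _, hx⟩)
  have hCg0 : 0 ≤ Cg := le_trans (abs_nonneg _) (hCg y ⟨le_refl _, hx⟩)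
  have hCW0 : 0 ≤ CW := le_trans (abs_nonneg _) (hCW 0 ⟨by linarith, by linarith⟩)
  have hCWk0 : 0 ≤ CWk := le_trans (abs_nonneg _) (hCWk 0 ⟨by linarith, by linarith⟩)
  set S : Set ℝ := Ioc y x with hS
  have hSsub : S ⊆ Icc y x := Ioc_subset_Icc_self
  -- ae facts on restrictions
  have haeS : ∀ᵐ z ∂(volume.restrict S), F z = F' z := ae_restrict_of_ae haeF
  have haeBd : ∀ᵐ z ∂(volume.restrict S), |F' z| ≤ MF := by
    filter_upwards [haeS, ae_restrict_mem measurableSet_Ioc] with z h1 h2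
    rw [← h1]; exact hMF z (hSsub h2)
  -- inner' and its properties
  set inner' : ℝ → ℝ := fun z => ∫ u in Ioc y z, W (z - u) * g u * F' u with hinner'
  have hinner'm : Measurable inner' := by
    apply measurable_param_integral
      (f := fun p : ℝ × ℝ => W (p.1 - p.2) * g p.2 * F' p.2)
    exact ((hWc.measurable.comp (measurable_fst.sub measurable_snd)).mul
      (hg.comp measurable_snd)).mul (hF'm.comp measurable_snd)
  have hinner_eq : ∀ z, y ≤ z → (∫ u in y..z, W (z - u) * g u * F u) = inner' z := by
    intro z hz
    rw [intervalIntegral.integral_of_le hz, hinner']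
    refine integral_congr_ae ?_
    filter_upwards [ae_restrict_of_ae haeF] with u hu
    rw [hu]
  have hinner'_bd : ∀ z ∈ Icc y x, |inner' z| ≤ CW * Cg * MF * (x - y) := by
    intro z hz
    have h1 : |inner' z| ≤ ∫ u in Ioc y z, ‖W (z - u) * g u * F' u‖ ∂volume := by
      rw [← Real.norm_eq_abs]
      exact norm_integral_le_integral_norm _
    have h2 : (∫ u in Ioc y z, ‖W (z - u) * g u * F' u‖ ∂volume)
        ≤ ∫ _u in Ioc y z, CW * Cg * MF ∂volume := by
      refine integral_mono_of_nonneg (ae_of_all _ fun u => norm_nonneg _)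
        (integrable_const _) ?_
      filter_upwards [ae_restrict_of_ae haeF, ae_restrict_mem measurableSet_Ioc] with u h1' h2'
      have hu : u ∈ Icc y x := ⟨le_of_lt h2'.1, h2'.2.trans hz.2⟩
      rw [Real.norm_eq_abs, abs_mul, abs_mul, ← h1']
      have e1 : |W (z - u)| ≤ CW := hCW _ ⟨by linarith [hu.2, hz.1], by linarith [h2'.1, hz.2]⟩
      have e2 : |g u| ≤ Cg := hCg _ hu
      have e3 : |F u| ≤ MF := hMF _ hu
      exact mul_le_mul (mul_le_mul e1 e2 (abs_nonneg _) hCW0) e3 (abs_nonneg _)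
        (mul_nonneg hCW0 hCg0)
    have h3 : (∫ _u in Ioc y z, CW * Cg * MF ∂volume) = CW * Cg * MF * (z - y) := by
      rw [setIntegral_const, measureReal_def, Real.volume_Ioc, ENNReal.toReal_ofReal (by linarith [hz.1]),
        smul_eq_mul, mul_comm]
    calc |inner' z| ≤ CW * Cg * MF * (z - y) := by rw [← h3]; exact h1.trans h2
      _ ≤ CW * Cg * MF * (x - y) := by
          have := mul_nonneg (mul_nonneg hCW0 hCg0) hMF0
          nlinarith [hz.2]
  -- generic integrability
  -- integrability of main integrands on S
  have hmkint : ∀ (G : ℝ → ℝ) (C : ℝ), AEStronglyMeasurable G (volume.restrict S) →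
      (∀ᵐ z ∂(volume.restrict S), |G z| ≤ C) → IntegrableOn G S volume := by
    intro G C hm hbd
    refine Integrable.mono' (integrable_const C) hm ?_
    filter_upwards [hbd] with z hz
    rwa [Real.norm_eq_abs]
  have hWkbd : ∀ z ∈ Icc y x, |Wk (x - z)| ≤ CWk := fun z hz =>
    hCWk _ ⟨by linarith [hz.2], by linarith [hz.1]⟩
  have hWbd : ∀ z ∈ Icc y x, |W (x - z)| ≤ CW := fun z hz =>
    hCW _ ⟨by linarith [hz.2], by linarith [hz.1]⟩
  -- named integrals
  have intA : IntegrableOn (fun z => Wk (x - z) * g z * F' z) S volume := by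
    refine hmkint _ (CWk * Cg * MF) ?_ ?_
    · exact (((hWkc.measurable.comp (measurable_const.sub measurable_id)).mul hg).mul
        hF'm).aestronglyMeasurable.mono_measure Measure.restrict_le_self
    · filter_upwards [haeBd, ae_restrict_mem measurableSet_Ioc] with z h1 h2
      rw [abs_mul, abs_mul]
      exact mul_le_mul (mul_le_mul (hWkbd z (hSsub h2)) (hCg z (hSsub h2)) (abs_nonneg _) hCWk0)
        h1 (abs_nonneg _) (mul_nonneg hCWk0 hCg0)
  have intE : IntegrableOn (fun z => W (x - z) * g z * F' z) S volume := by
    refine hmkint _ (CW * Cg * MF) ?_ ?_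
    · exact (((hWc.measurable.comp (measurable_const.sub measurable_id)).mul hg).mul
        hF'm).aestronglyMeasurable.mono_measure Measure.restrict_le_self
    · filter_upwards [haeBd, ae_restrict_mem measurableSet_Ioc] with z h1 h2
      rw [abs_mul, abs_mul]
      exact mul_le_mul (mul_le_mul (hWbd z (hSsub h2)) (hCg z (hSsub h2)) (abs_nonneg _) hCW0)
        h1 (abs_nonneg _) (mul_nonneg hCW0 hCg0)
  have intB1 : IntegrableOn (fun z => Wk (x - z) * W (z - y)) S volume := by
    refine hmkint _ (CWk * CW) ?_ ?_
    · exact ((hWkc.comp (continuous_const.sub continuous_id)).mul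
        (hWc.comp (continuous_id.sub continuous_const))).measurable.aestronglyMeasurable.mono_measure
        Measure.restrict_le_self
    · filter_upwards [ae_restrict_mem measurableSet_Ioc] with z h2
      have hz := hSsub h2
      rw [abs_mul]
      exact mul_le_mul (hWkbd z hz) (hCW _ ⟨by linarith [hz.1], by linarith [hz.2]⟩)
        (abs_nonneg _) hCWk0
  have intB2 : IntegrableOn (fun z => Wk (x - z) * inner' z) S volume := by
    refine hmkint _ (CWk * (CW * Cg * MF * (x - y))) ?_ ?_
    · exact ((hWkc.measurable.comp (measurable_const.sub measurable_id)).mul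
        hinner'm).aestronglyMeasurable.mono_measure Measure.restrict_le_self
    · filter_upwards [ae_restrict_mem measurableSet_Ioc] with z h2
      have hz := hSsub h2
      rw [abs_mul]
      refine mul_le_mul (hWkbd z hz) (hinner'_bd z hz) (abs_nonneg _) hCWk0
  have intWkF : IntegrableOn (fun z => Wk (x - z) * F' z) S volume := by
    refine hmkint _ (CWk * MF) ?_ ?_
    · exact ((hWkc.measurable.comp (measurable_const.sub measurable_id)).mul
        hF'm).aestronglyMeasurable.mono_measure Measure.restrict_le_self
    · filter_upwards [haeBd, ae_restrict_mem measurableSet_Ioc] with z h1 h2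
      rw [abs_mul]
      exact mul_le_mul (hWkbd z (hSsub h2)) h1 (abs_nonneg _) hCWk0
  -- the interval integral in the goal, in terms of set integrals
  set Av : ℝ := ∫ z in S, Wk (x - z) * g z * F' z ∂volume with hAv
  set Ev : ℝ := ∫ z in S, W (x - z) * g z * F' z ∂volume with hEv
  set B1v : ℝ := ∫ z in S, Wk (x - z) * W (z - y) ∂volume with hB1v
  set B2v : ℝ := ∫ z in S, Wk (x - z) * inner' z ∂volume with hB2v
  have hI : (∫ z in y..x, Wk (x - z) * (g z - q) * F z) = Av - q * (B1v + B2v) := by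
    rw [intervalIntegral.integral_of_le hx]
    have e1 : ∫ z in S, Wk (x - z) * (g z - q) * F z ∂volume
        = ∫ z in S, (Wk (x - z) * g z * F' z - q * (Wk (x - z) * F' z)) ∂volume := by
      refine integral_congr_ae ?_
      filter_upwards [haeS] with z h1
      rw [h1]; ring
    rw [e1, integral_sub intA (intWkF.const_mul q), MeasureTheory.integral_const_mul]
    have e2 : ∫ z in S, Wk (x - z) * F' z ∂volume
        = ∫ z in S, (Wk (x - z) * W (z - y) + Wk (x - z) * inner' z) ∂volume := by
      refine integral_congr_ae ?_
      filter_upwards [haeS, ae_restrict_mem measurableSet_Ioc] with z h1 h2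
      rw [← h1, heq z (le_of_lt h2.1), hinner_eq z (le_of_lt h2.1), mul_add]
    rw [e2, integral_add intB1 intB2, hAv, hB1v, hB2v]
  have hB1 : q * B1v = Wk (x - y) - W (x - y) := by
    have hfn : (fun z => Wk (x - z) * W (z - y))
        = fun z => (fun v => Wk (x - y - v) * W v) (z - y) := by
      funext z; simp only; congr 2; ring
    have ht : B1v = ∫ v in (0:ℝ)..(x - y), Wk (x - y - v) * W v := by
      rw [hB1v, ← intervalIntegral.integral_of_le hx, hfn,
        intervalIntegral.integral_comp_sub_right (fun v => Wk (x - y - v) * W v) y, sub_self]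
    rw [ht, ← hres (x - y) (by linarith)]
  -- the inner kernel identity
  have hker : ∀ u ∈ S, q * (∫ z in S, Wk (x - z) * W (z - u) ∂volume)
      = Wk (x - u) - W (x - u) := by
    intro u hu
    have hu' := hSsub hu
    have hsplit : S = Ioc y u ∪ Ioc u x := (Ioc_union_Ioc_eq_Ioc (le_of_lt hu.1) hu.2).symm
    have hintS : IntegrableOn (fun z => Wk (x - z) * W (z - u)) S volume := by
      refine hmkint _ (CWk * CW) ?_ ?_
      · exact ((hWkc.comp (continuous_const.sub continuous_id)).mul
          (hWc.comp (continuous_id.sub continuous_const))).measurable.aestronglyMeasurable.mono_measure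
          Measure.restrict_le_self
      · filter_upwards [ae_restrict_mem measurableSet_Ioc] with z h2
        have hz := hSsub h2
        rw [abs_mul]
        exact mul_le_mul (hWkbd z hz)
          (hCW _ ⟨by linarith [hz.1, hu'.2], by linarith [hz.2, hu'.1]⟩) (abs_nonneg _) hCWk0
    have h1 : ∫ z in Ioc y u, Wk (x - z) * W (z - u) ∂volume = 0 := by
      rw [setIntegral_congr_fun measurableSet_Ioc (g := fun _ => (0:ℝ)) fun z hz => ?_]
      · simp
      · rcases lt_or_eq_of_le hz.2 with h | h
        · rw [hWneg (z - u) (by linarith), mul_zero]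
        · rw [h, sub_self, hW0, mul_zero]
    have hfn : (fun z => Wk (x - z) * W (z - u))
        = fun z => (fun v => Wk (x - u - v) * W v) (z - u) := by
      funext z; simp only; congr 2; ring
    have hIocux : ∫ z in Ioc u x, Wk (x - z) * W (z - u) ∂volume
        = ∫ v in (0:ℝ)..(x - u), Wk (x - u - v) * W v := by
      rw [← intervalIntegral.integral_of_le hu.2, hfn,
        intervalIntegral.integral_comp_sub_right (fun v => Wk (x - u - v) * W v) u, sub_self]
    have : (∫ z in S, Wk (x - z) * W (z - u) ∂volume)
        = ∫ v in (0:ℝ)..(x - u), Wk (x - u - v) * W v := by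
      rw [show (∫ z in S, Wk (x - z) * W (z - u) ∂volume)
          = ∫ z in Ioc y u ∪ Ioc u x, Wk (x - z) * W (z - u) ∂volume by rw [← hsplit]]
      rw [setIntegral_union (Set.Ioc_disjoint_Ioc_of_le le_rfl) measurableSet_Ioc
        (hintS.mono_set (by rw [hsplit]; exact subset_union_left))
        (hintS.mono_set (by rw [hsplit]; exact subset_union_right)), h1, zero_add, hIocux]
    rw [this, ← hres (x - u) (by linarith [hu'.2])]
  -- extension of inner' to the full box
  have hinner_ext : ∀ z ∈ S, inner' z = ∫ u in S, W (z - u) * g u * F' u ∂volume := by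
    intro z hz
    have hz' := hSsub hz
    have hsplit : S = Ioc y z ∪ Ioc z x := (Ioc_union_Ioc_eq_Ioc (le_of_lt hz.1) hz.2).symm
    have hint_piece : IntegrableOn (fun u => W (z - u) * g u * F' u) S volume := by
      refine hmkint _ (CW * Cg * MF) ?_ ?_
      · exact (((hWc.measurable.comp (measurable_const.sub measurable_id)).mul hg).mul
          hF'm).aestronglyMeasurable.mono_measure Measure.restrict_le_self
      · filter_upwards [haeBd, ae_restrict_mem measurableSet_Ioc] with u h1 h2
        have hu := hSsub h2
        rw [abs_mul, abs_mul]
        have e1 : |W (z - u)| ≤ CW := hCW _ ⟨by linarith [hu.2, hz'.1], by linarith [hu.1, hz'.2]⟩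
        exact mul_le_mul (mul_le_mul e1 (hCg u hu) (abs_nonneg _) hCW0) h1 (abs_nonneg _)
          (mul_nonneg hCW0 hCg0)
    have hzero : ∫ u in Ioc z x, W (z - u) * g u * F' u ∂volume = 0 := by
      rw [setIntegral_congr_fun measurableSet_Ioc (g := fun _ => (0:ℝ)) fun u hu => ?_]
      · simp
      · rw [hWneg (z - u) (by linarith [hu.1]), zero_mul, zero_mul]
    rw [hinner']
    simp only
    rw [show (∫ u in S, W (z - u) * g u * F' u ∂volume)
        = ∫ u in Ioc y z ∪ Ioc z x, W (z - u) * g u * F' u ∂volume by rw [← hsplit]]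
    rw [setIntegral_union (Set.Ioc_disjoint_Ioc_of_le le_rfl) measurableSet_Ioc
      (hint_piece.mono_set (by rw [hsplit]; exact subset_union_left))
      (hint_piece.mono_set (by rw [hsplit]; exact subset_union_right)), hzero, add_zero]
  -- Fubini
  have hN0 : (volume : Measure ℝ) {a | ¬ F a = F' a} = 0 := haeF
  obtain ⟨N', hNsub, hN'm, hN'0⟩ := exists_measurable_superset_of_null hN0
  have hFubInt : Integrable (Function.uncurry fun z u => Wk (x - z) * (W (z - u) * g u * F' u))
      ((volume.restrict S).prod (volume.restrict S)) := by
    have hmeas : Measurable fun p : ℝ × ℝ => Wk (x - p.1) * (W (p.1 - p.2) * g p.2 * F' p.2) :=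
      (hWkc.measurable.comp (measurable_const.sub measurable_fst)).mul
        (((hWc.measurable.comp (measurable_fst.sub measurable_snd)).mul
          (hg.comp measurable_snd)).mul (hF'm.comp measurable_snd))
    have hprod : (volume.restrict S).prod (volume.restrict S)
        = ((volume : Measure ℝ).prod volume).restrict (S ×ˢ S) := Measure.prod_restrict S S
    have e1 : ∀ᵐ p ∂((volume.restrict S).prod (volume.restrict S)), p ∈ S ×ˢ S := by
      rw [hprod]
      exact ae_restrict_mem (measurableSet_Ioc.prod measurableSet_Ioc)
    have e2 : ∀ᵐ p ∂((volume.restrict S).prod (volume.restrict S)), p.2 ∉ N' := by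
      rw [ae_iff]
      have hset : {p : ℝ × ℝ | ¬ p.2 ∉ N'} = (univ : Set ℝ) ×ˢ N' := by
        ext p; simp [not_not]
      rw [hset, Measure.prod_prod]
      have : (volume.restrict S) N' = 0 := by
        rw [Measure.restrict_apply hN'm]
        exact le_antisymm (le_trans (measure_mono Set.inter_subset_left) hN'0.le) zero_le
      rw [this, mul_zero]
    refine Integrable.mono' (integrable_const (CWk * (CW * Cg * MF)))
      hmeas.aestronglyMeasurable ?_
    filter_upwards [e1, e2] with p hp1 hp2
    have hFeq : F' p.2 = F p.2 := by
      by_contra hne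
      exact hp2 (hNsub (by simpa using Ne.symm hne))
    have hp1' : p.1 ∈ Icc y x := hSsub hp1.1
    have hp2' : p.2 ∈ Icc y x := hSsub hp1.2
    rw [Function.uncurry_apply_pair, Real.norm_eq_abs, abs_mul, abs_mul, abs_mul, hFeq]
    have e3 : |W (p.1 - p.2)| ≤ CW :=
      hCW _ ⟨by linarith [hp1'.1, hp2'.2], by linarith [hp1'.2, hp2'.1]⟩
    exact mul_le_mul (hWkbd _ hp1')
      (mul_le_mul (mul_le_mul e3 (hCg _ hp2') (abs_nonneg _) hCW0) (hMF _ hp2') (abs_nonneg _)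
        (mul_nonneg hCW0 hCg0))
      (by positivity) hCWk0
  have hswap := MeasureTheory.integral_integral_swap
    (f := fun z u => Wk (x - z) * (W (z - u) * g u * F' u)) hFubInt
  have hB2 : q * B2v = ∫ u in S, (Wk (x - u) - W (x - u)) * (g u * F' u) ∂volume := by
    have e4 : B2v = ∫ z in S, (∫ u in S, Wk (x - z) * (W (z - u) * g u * F' u) ∂volume) ∂volume := by
      rw [hB2v]
      refine setIntegral_congr_fun measurableSet_Ioc fun z hz => ?_
      rw [hinner_ext z hz, ← MeasureTheory.integral_const_mul]
    rw [e4, hswap, ← MeasureTheory.integral_const_mul]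
    refine setIntegral_congr_fun measurableSet_Ioc fun u hu => ?_
    have e5 : (∫ z in S, Wk (x - z) * (W (z - u) * g u * F' u) ∂volume)
        = (∫ z in S, Wk (x - z) * W (z - u) ∂volume) * (g u * F' u) := by
      rw [← MeasureTheory.integral_mul_const]
      refine setIntegral_congr_fun measurableSet_Ioc fun z hz => ?_
      ring
    rw [e5, ← mul_assoc, hker u hu]
  -- final assembly
  have hFx : F x = W (x - y) + Ev := by
    rw [heq x hx, intervalIntegral.integral_of_le hx, hEv]
    congr 1
    refine integral_congr_ae ?_
    filter_upwards [haeS] with u hu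
    rw [hu]
  have hD : (∫ u in S, (Wk (x - u) - W (x - u)) * (g u * F' u) ∂volume) = Av - Ev := by
    rw [hAv, hEv, ← integral_sub intA intE]
    refine setIntegral_congr_fun measurableSet_Ioc fun u hu => ?_
    ring
  rw [hD] at hB2
  have hqadd : q * (B1v + B2v) = q * B1v + q * B2v := mul_add q B1v B2v
  rw [hI, hFx]
  linarith [hB1, hB2, hqadd]
theorem step_omega_scale_recursion
    (n : ℕ) (p : ℕ → ℝ) (xs : ℕ → ℝ)
    (hp : ∀ j, 0 ≤ p j)
    (hxs0 : 0 ≤ xs 1) (hxsmono : ∀ j, xs j ≤ xs (j + 1))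
    (Wq : ℝ → ℝ → ℝ)  -- the family of q-scale functions
    (hWcont : ∀ q ≥ (0:ℝ), Continuous (Wq q))
    (hWneg : ∀ q ≥ (0:ℝ), ∀ x < (0:ℝ), Wq q x = 0)
    (hres : ∀ q₁ ≥ (0:ℝ), ∀ q₂ ≥ (0:ℝ), ∀ x ≥ (0:ℝ),
      Wq q₂ x - Wq q₁ x = (q₂ - q₁) * ∫ y in (0:ℝ)..x, Wq q₂ (x - y) * Wq q₁ y)
    (y : ℝ)
    (𝒲 : ℕ → ℝ → ℝ)  -- 𝒲 k = 𝒲_k(·, y)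
    (h𝒲bdd : ∀ k, LocallyBdd (𝒲 k))
    (h𝒲below : ∀ k, ∀ x < y, 𝒲 k x = Wq 0 (x - y))
    (h𝒲eq : ∀ k, ∀ x ≥ y,
      𝒲 k x = Wq 0 (x - y) + ∫ z in y..x, Wq 0 (x - z) * stepOmega p xs k z * 𝒲 k z) :
    ∀ k : ℕ, k + 1 ≤ n →
      (∀ x ≤ xs (k + 1), 𝒲 (k + 1) x = 𝒲 k x) ∧
      (∀ x : ℝ, 𝒲 (k + 1) x =
        𝒲 k x + (p (k + 1) - p k) * ∫ z in (xs (k + 1))..x, Wq (p (k + 1)) (x - z) * 𝒲 k z) := by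
  intro k _
  have hW0c : Continuous (Wq 0) := hWcont 0 le_rfl
  have hW0neg : ∀ s < (0:ℝ), Wq 0 s = 0 := hWneg 0 le_rfl
  set q : ℝ := p (k + 1) with hqdef
  have hq : 0 ≤ q := hp (k + 1)
  have hWqc : Continuous (Wq q) := hWcont q hq
  have hWqneg : ∀ s < (0:ℝ), Wq q s = 0 := hWneg q hq
  have hWq0 : Wq q 0 = 0 := wzero hWqc hWqneg
  set a : ℝ := xs (k + 1) with hadef
  -- measurability of each 𝒲 j
  have hmeas : ∀ j, AEMeasurable (𝒲 j) (volume : Measure ℝ) := fun j =>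
    lemmaM hW0c (stepOmega_measurable p xs j) (h𝒲bdd j) (stepOmega_locallyBdd p xs j)
      (h𝒲below j) (h𝒲eq j)
  -- 𝒲 j vanishes at and below y
  have h𝒲zero : ∀ j, ∀ x ≤ y, 𝒲 j x = 0 := by
    intro j x hx
    rcases lt_or_eq_of_le hx with h | h
    · rw [h𝒲below j x h, hW0neg _ (by linarith)]
    · rw [h, h𝒲eq j y le_rfl, intervalIntegral.integral_same, sub_self,
        wzero hW0c hW0neg, add_zero]
  -- Part 1
  have part1 : ∀ x ≤ a, 𝒲 (k + 1) x = 𝒲 k x := by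
    set D : ℝ → ℝ := fun t => 𝒲 (k + 1) t - 𝒲 k t with hD
    have hDb : LocallyBdd D := locallyBdd_sub (h𝒲bdd (k + 1)) (h𝒲bdd k)
    have hDm : AEMeasurable D (volume : Measure ℝ) := (hmeas (k + 1)).sub (hmeas k)
    have hDeq : ∀ x, y ≤ x → x ≤ a →
        D x = ∫ z in y..x, Wq 0 (x - z) * stepOmega p xs k z * D z := by
      intro x h1 h2
      have e1 : (∫ z in y..x, Wq 0 (x - z) * stepOmega p xs (k + 1) z * 𝒲 (k + 1) z)
          = ∫ z in y..x, Wq 0 (x - z) * stepOmega p xs k z * 𝒲 (k + 1) z := by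
        refine intervalIntegral.integral_congr fun z hz => ?_
        rw [uIcc_of_le h1] at hz
        rw [stepOmega_eq_of_le (le_trans hz.2 h2)]
      have II1 : IntervalIntegrable (fun z => Wq 0 (x - z) * stepOmega p xs k z * 𝒲 (k + 1) z)
          volume y x :=
        II_helper (hmeas (k + 1)) (h𝒲bdd (k + 1))
          ((hW0c.measurable.comp (measurable_const.sub measurable_id)).mul
            (stepOmega_measurable p xs k))
          (locallyBdd_mul (continuous_locallyBdd (hW0c.comp (continuous_const.sub continuous_id)))
            (stepOmega_locallyBdd p xs k)) y x
      have II2 : IntervalIntegrable (fun z => Wq 0 (x - z) * stepOmega p xs k z * 𝒲 k z)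
          volume y x :=
        II_helper (hmeas k) (h𝒲bdd k)
          ((hW0c.measurable.comp (measurable_const.sub measurable_id)).mul
            (stepOmega_measurable p xs k))
          (locallyBdd_mul (continuous_locallyBdd (hW0c.comp (continuous_const.sub continuous_id)))
            (stepOmega_locallyBdd p xs k)) y x
      have := h𝒲eq (k + 1) x h1
      have h2' := h𝒲eq k x h1
      rw [hD]
      simp only
      rw [this, h2', e1, add_sub_add_left_eq_sub, ← intervalIntegral.integral_sub II1 II2]
      refine intervalIntegral.integral_congr fun z _ => ?_
      ring
    intro x hxa
    rcases lt_or_ge x y with hxy | hxy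
    · rw [h𝒲below (k + 1) x hxy, h𝒲below k x hxy]
    · have := gronwall hW0c (stepOmega_measurable p xs k) (stepOmega_locallyBdd p xs k)
        hDm hDb hDeq x hxy hxa
      rw [hD] at this
      simp only at this
      linarith
  refine ⟨part1, ?_⟩
  -- change of killing
  have hresk : ∀ s ≥ (0:ℝ), Wq q s - Wq 0 s = q * ∫ u in (0:ℝ)..s, Wq q (s - u) * Wq 0 u := by
    intro s hs
    have := hres 0 le_rfl q hq s hs
    rwa [sub_zero] at this
  have hCK : ∀ j, ∀ x, y ≤ x → 𝒲 j x = Wq q (x - y) +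
      ∫ z in y..x, Wq q (x - z) * (stepOmega p xs j z - q) * 𝒲 j z := fun j x hx =>
    change_killing hW0c hW0neg hWqc hWqneg hresk (stepOmega_measurable p xs j)
      (stepOmega_locallyBdd p xs j) (hmeas j) (h𝒲bdd j) (h𝒲eq j) hx
  intro x
  rcases lt_or_ge x y with hxy | hxy
  · -- x < y : all terms vanish
    have hzero : ∀ z, Wq q (x - z) * 𝒲 k z = 0 := by
      intro z
      rcases lt_trichotomy z x with h | h | h
      · rw [h𝒲zero k z (by linarith), mul_zero]
      · rw [h, sub_self, hWq0, zero_mul]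
      · rw [hWqneg _ (by linarith), zero_mul]
    rw [h𝒲below (k + 1) x hxy, h𝒲below k x hxy,
      intervalIntegral.integral_congr (g := fun _ => (0:ℝ)) fun z _ => hzero z]
    simp
  · -- x ≥ y
    have h1 := hCK (k + 1) x hxy
    have h2 := hCK k x hxy
    have IIψ : ∀ (j : ℕ) (b c : ℝ), IntervalIntegrable
        (fun z => Wq q (x - z) * (stepOmega p xs j z - q) * 𝒲 j z) volume b c := by
      intro j b c
      refine II_helper (hmeas j) (h𝒲bdd j) ?_ ?_ b c
      · exact (hWqc.measurable.comp (measurable_const.sub measurable_id)).mul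
          ((stepOmega_measurable p xs j).sub measurable_const)
      · exact locallyBdd_mul
          (continuous_locallyBdd (hWqc.comp (continuous_const.sub continuous_id)))
          (locallyBdd_sub (stepOmega_locallyBdd p xs j)
            (continuous_locallyBdd continuous_const))
    have IIρ : ∀ (b c : ℝ), IntervalIntegrable (fun z => Wq q (x - z) * 𝒲 k z) volume b c :=
      fun b c => II_helper (hmeas k) (h𝒲bdd k)
        (hWqc.measurable.comp (measurable_const.sub measurable_id))
        (continuous_locallyBdd (hWqc.comp (continuous_const.sub continuous_id))) b c
    have hpt : ∀ z, a < z →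
        Wq q (x - z) * (stepOmega p xs (k + 1) z - q) * 𝒲 (k + 1) z
          - Wq q (x - z) * (stepOmega p xs k z - q) * 𝒲 k z
        = (p (k + 1) - p k) * (Wq q (x - z) * 𝒲 k z) := by
      intro z hz
      have e1 : stepOmega p xs (k + 1) z = p (k + 1) := stepOmega_eq_const hxsmono hz
      have e2 : stepOmega p xs k z = p k :=
        stepOmega_eq_const hxsmono (lt_of_le_of_lt (hxsmono k) hz)
      rw [e1, e2, hqdef]
      ring
    have hpt0 : ∀ z, z ≤ a →
        Wq q (x - z) * (stepOmega p xs (k + 1) z - q) * 𝒲 (k + 1) z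
          - Wq q (x - z) * (stepOmega p xs k z - q) * 𝒲 k z = 0 := by
      intro z hz
      rw [stepOmega_eq_of_le hz, part1 z hz]
      ring
    have hdiff : 𝒲 (k + 1) x - 𝒲 k x
        = ∫ z in y..x, (Wq q (x - z) * (stepOmega p xs (k + 1) z - q) * 𝒲 (k + 1) z
            - Wq q (x - z) * (stepOmega p xs k z - q) * 𝒲 k z) := by
      rw [intervalIntegral.integral_sub (IIψ (k + 1) y x) (IIψ k y x)]
      linarith [h1, h2]
    rcases le_or_gt x a with hxa | hax
    · -- x ≤ a
      have hW1 : 𝒲 (k + 1) x = 𝒲 k x := part1 x hxa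
      have heq0 : EqOn (fun z => Wq q (x - z) * 𝒲 k z) (fun _ => (0:ℝ)) (uIcc a x) := by
        intro z hz
        rw [Set.uIcc_comm, uIcc_of_le hxa] at hz
        show Wq q (x - z) * 𝒲 k z = 0
        rcases eq_or_lt_of_le hz.1 with h | h
        · rw [← h, sub_self, hWq0, zero_mul]
        · rw [hWqneg _ (by linarith), zero_mul]
      rw [hW1, intervalIntegral.integral_congr heq0, intervalIntegral.integral_zero,
        mul_zero, add_zero]
    · -- a < x
      rcases le_or_gt y a with hya | hay
      · -- y ≤ a < x
        have hsplit := intervalIntegral.integral_add_adjacent_intervals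
          ((IIψ (k + 1) y a).sub (IIψ k y a)) ((IIψ (k + 1) a x).sub (IIψ k a x))
        have heq1 : EqOn (fun z => Wq q (x - z) * (stepOmega p xs (k + 1) z - q) * 𝒲 (k + 1) z
            - Wq q (x - z) * (stepOmega p xs k z - q) * 𝒲 k z) (fun _ => (0:ℝ)) (uIcc y a) := by
          intro z hz
          rw [uIcc_of_le hya] at hz
          exact hpt0 z hz.2
        have hz1 : (∫ z in y..a, (Wq q (x - z) * (stepOmega p xs (k + 1) z - q) * 𝒲 (k + 1) z
            - Wq q (x - z) * (stepOmega p xs k z - q) * 𝒲 k z)) = 0 := by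
          rw [intervalIntegral.integral_congr heq1, intervalIntegral.integral_zero]
        have hz2 : (∫ z in a..x, (Wq q (x - z) * (stepOmega p xs (k + 1) z - q) * 𝒲 (k + 1) z
            - Wq q (x - z) * (stepOmega p xs k z - q) * 𝒲 k z))
            = (p (k + 1) - p k) * ∫ z in a..x, Wq q (x - z) * 𝒲 k z := by
          rw [← intervalIntegral.integral_const_mul, intervalIntegral.integral_of_le hax.le,
            intervalIntegral.integral_of_le hax.le]
          refine setIntegral_congr_fun measurableSet_Ioc fun z hz => ?_
          exact hpt z hz.1
        rw [← hsplit, hz1, zero_add, hz2] at hdiff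
        linarith
      · -- a < y ≤ x
        have hz2 : (∫ z in y..x, (Wq q (x - z) * (stepOmega p xs (k + 1) z - q) * 𝒲 (k + 1) z
            - Wq q (x - z) * (stepOmega p xs k z - q) * 𝒲 k z))
            = (p (k + 1) - p k) * ∫ z in y..x, Wq q (x - z) * 𝒲 k z := by
          rw [← intervalIntegral.integral_const_mul, intervalIntegral.integral_of_le hxy,
            intervalIntegral.integral_of_le hxy]
          refine setIntegral_congr_fun measurableSet_Ioc fun z hz => ?_
          exact hpt z (lt_trans hay hz.1)
        have heq2 : EqOn (fun z => Wq q (x - z) * 𝒲 k z) (fun _ => (0:ℝ)) (uIcc a y) := by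
          intro z hz
          rw [uIcc_of_le hay.le] at hz
          show Wq q (x - z) * 𝒲 k z = 0
          rw [h𝒲zero k z hz.2, mul_zero]
        have hzero : (∫ z in a..y, Wq q (x - z) * 𝒲 k z) = 0 := by
          rw [intervalIntegral.integral_congr heq2, intervalIntegral.integral_zero]
        have hsplit := intervalIntegral.integral_add_adjacent_intervals (IIρ a y) (IIρ y x)
        rw [hz2] at hdiff
        rw [← hsplit, hzero, zero_add]
        linarith
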